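/- Let v₁, v₂ ∈ ℍ(ℚ) be linearly independent over ℚ and let L be their ℚ-span. Then L = {x ∈ ℍ(ℚ) : a₁(v₁,v₂)·x = x·a₂(v₁,v₂)}. -/

import Mathlib

open Quaternion

lemma central (a y : ℍ[ℚ]) (h0 : a.re = 0) (ha : a ≠ 0) (h : a * y = y * a) :
    ∃ s t : ℚ, y = Quaternion.coe s + t • a := by
  have hI := congrArg QuaternionAlgebra.imI h
  have hJ := congrArg QuaternionAlgebra.imJ h
  have hK := congrArg QuaternionAlgebra.imK h
  simp only [Quaternion.imI_mul, Quaternion.imJ_mul, Quaternion.imK_mul, h0] at hI hJ hK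
  have c1 : a.imJ * y.imK = a.imK * y.imJ := by linarith
  have c2 : a.imK * y.imI = a.imI * y.imK := by linarith
  have c3 : a.imI * y.imJ = a.imJ * y.imI := by linarith
  have hN : a.imI^2 + a.imJ^2 + a.imK^2 ≠ 0 := by
    intro hn
    have e1 : a.imI = 0 := by nlinarith [sq_nonneg a.imI, sq_nonneg a.imJ, sq_nonneg a.imK]
    have e2 : a.imJ = 0 := by nlinarith [sq_nonneg a.imI, sq_nonneg a.imJ, sq_nonneg a.imK]
    have e3 : a.imK = 0 := by nlinarith [sq_nonneg a.imI, sq_nonneg a.imJ, sq_nonneg a.imK]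
    exact ha (by ext <;> simp [h0, e1, e2, e3])
  refine ⟨y.re, (a.imI*y.imI + a.imJ*y.imJ + a.imK*y.imK)/(a.imI^2 + a.imJ^2 + a.imK^2), ?_⟩
  ext
  · show y.re = _
    simp [h0]
  · show y.imI = _
    simp only [Quaternion.imI_add, Quaternion.imI_smul, smul_eq_mul]
    rw [show (Quaternion.coe y.re).imI = 0 from rfl, zero_add]
    field_simp
    linear_combination (-a.imJ) * c3 + a.imK * c2
  · show y.imJ = _
    simp only [Quaternion.imJ_add, Quaternion.imJ_smul, smul_eq_mul]
    rw [show (Quaternion.coe y.re).imJ = 0 from rfl, zero_add]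
    field_simp
    linear_combination a.imI * c3 - a.imK * c1
  · show y.imK = _
    simp only [Quaternion.imK_add, Quaternion.imK_smul, smul_eq_mul]
    rw [show (Quaternion.coe y.re).imK = 0 from rfl, zero_add]
    field_simp
    linear_combination a.imJ * c1 - a.imI * c2

theorem stmt_3 (v₁ v₂ : ℍ[ℚ]) (hli : LinearIndependent ℚ ![v₁, v₂]) :
    (Submodule.span ℚ ({v₁, v₂} : Set ℍ[ℚ]) : Set ℍ[ℚ]) =
      {x : ℍ[ℚ] | (v₁ * star v₂).im * x = x * (star v₂ * v₁).im} := by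
  set a : ℍ[ℚ] := (v₁ * star v₂).im with hadef
  set b : ℍ[ℚ] := (star v₂ * v₁).im with hbdef
  set r : ℚ := (v₁ * star v₂).re with hrdef
  have hv₂ : v₂ ≠ 0 := by
    have := hli.ne_zero 1
    simpa using this
  have hN : normSq v₂ ≠ 0 := normSq_ne_zero.2 hv₂
  have hre : (star v₂ * v₁).re = r := by
    rw [hrdef]; simp [Quaternion.re_mul]; ring
  have ha : a = v₁ * star v₂ - Quaternion.coe r := by
    rw [eq_sub_iff_add_eq, add_comm]; exact Quaternion.re_add_im _
  have hb : b = star v₂ * v₁ - Quaternion.coe r := by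
    rw [eq_sub_iff_add_eq, add_comm, ← hre]; exact Quaternion.re_add_im _
  have hav₂ : a * v₂ = (normSq v₂ : ℚ) • v₁ - r • v₂ := by
    rw [ha, sub_mul, mul_assoc, Quaternion.star_mul_self, Quaternion.mul_coe_eq_smul,
      Quaternion.coe_mul_eq_smul]
  ext x
  constructor
  · intro hx
    induction hx using Submodule.span_induction with
    | mem z hz =>
      rcases hz with hz | hz
      · subst hz
        show a * z = z * b
        rw [ha, hb, sub_mul, mul_sub, mul_assoc, (Quaternion.coe_commute r z).eq]
      · simp only [Set.mem_singleton_iff] at hz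
        subst hz
        show a * z = z * b
        rw [hb, mul_sub, ← mul_assoc, Quaternion.self_mul_star, ← hre]
        rw [ha, sub_mul, mul_assoc, Quaternion.star_mul_self, hre]
        rw [(Quaternion.coe_commute r z).eq, (Quaternion.coe_commute (normSq z) v₁).eq]
    | zero => show a * 0 = 0 * b; simp
    | add p q _ _ hp hq =>
      show a * (p + q) = (p + q) * b
      rw [mul_add, add_mul, hp, hq]
    | smul c p _ hp =>
      show a * (c • p) = (c • p) * b
      rw [mul_smul_comm, smul_mul_assoc, hp]
  · intro hx
    have h : a * x = x * b := hx
    have hbs : b * star v₂ = star v₂ * a := by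
      rw [ha, hb, sub_mul, mul_sub, mul_assoc, (Quaternion.coe_commute r (star v₂)).eq]
    have hay : a * (x * star v₂) = (x * star v₂) * a := by
      rw [← mul_assoc, h, mul_assoc, hbs, mul_assoc]
    have ha0 : a.re = 0 := Quaternion.re_im _
    have hane : a ≠ 0 := by
      intro h0
      have h1 : v₁ * star v₂ = Quaternion.coe r := by
        have := ha
        rw [h0, eq_comm, sub_eq_zero] at this
        exact this
      have h2 : (normSq v₂ : ℚ) • v₁ = r • v₂ := by
        have := congrArg (· * v₂) h1
        simpa [mul_assoc, Quaternion.star_mul_self, Quaternion.mul_coe_eq_smul,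
          Quaternion.coe_mul_eq_smul] using this
      have := (LinearIndependent.pair_iff.mp hli (normSq v₂) (-r)
        (by rw [neg_smul, h2]; abel)).1
      exact hN this
    obtain ⟨s, t, hst⟩ := central a (x * star v₂) ha0 hane hay
    have key : (normSq v₂ : ℚ) • x = (t * normSq v₂) • v₁ + (s - t * r) • v₂ := by
      have h3 := congrArg (· * v₂) hst
      simp only [add_mul, smul_mul_assoc, Quaternion.coe_mul_eq_smul] at h3
      rw [mul_assoc, Quaternion.star_mul_self, Quaternion.mul_coe_eq_smul, hav₂] at h3
      rw [h3, smul_sub, smul_smul, smul_smul, sub_smul]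
      abel
    rw [SetLike.mem_coe, Submodule.mem_span_pair]
    refine ⟨t, (s - t * r) / normSq v₂, ?_⟩
    have h4 := congrArg (fun z => (normSq v₂ : ℚ)⁻¹ • z) key
    simp only [smul_smul, inv_mul_cancel₀ hN, one_smul, smul_add] at h4
    rw [h4]
    match_scalars <;> field_simp
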